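/- Let k be a field, A a commutative k-algebra which is an integral domain, ℤ^N equipped with a translation-invariant linear order, and Ψ a valuation on A with values in ℤ^N. Let x₁, …, x_N, x′_k be nonzero elements of A and let b₁, …, b_N be integers such that x′_k · x_k = ∏_{i : b_i > 0} x_i^{b_i} + ∏_{i : b_i < 0} x_i^{−b_i} (empty products being 1). Assume v := Σ_{i=1}^N b_i·Ψ(x_i) ≠ 0, and set η := +1 if v > 0 and η := −1 otherwise. Then Ψ(x′_k) = −Ψ(x_k) + Σ_{i=1}^N [η·b_i]₊ · Ψ(x_i), where [x]₊ := max(x, 0). -/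

import Mathlib

/-- Auxiliary: Ψ of a finite product of nonzero elements is the sum of the values. -/
theorem stmt8_prod {A : Type*} [CommRing A] [IsDomain A] {N : ℕ}
    (Ψ : A → (Fin N → ℤ))
    (hΨmul : ∀ f g : A, f ≠ 0 → g ≠ 0 → Ψ (f * g) = Ψ f + Ψ g)
    (hΨ1 : Ψ 1 = 0) {ι : Type*} (s : Finset ι) (g : ι → A)
    (hg : ∀ i ∈ s, g i ≠ 0) : Ψ (∏ i ∈ s, g i) = ∑ i ∈ s, Ψ (g i) := by
  induction s using Finset.cons_induction with
  | empty => simpa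
  | cons a s ha ih =>
    rw [Finset.prod_cons, Finset.sum_cons,
      hΨmul _ _ (hg a (Finset.mem_cons_self a s))
        (Finset.prod_ne_zero_iff.2 fun i hi => hg i (Finset.mem_cons_of_mem hi)),
      ih fun i hi => hg i (Finset.mem_cons_of_mem hi)]

/-- Auxiliary: value of a sum when values differ. -/
theorem stmt8_addkey {k A : Type*} [Field k] [CommRing A] [IsDomain A] [Algebra k A]
    {N : ℕ}
    (le : (Fin N → ℤ) → (Fin N → ℤ) → Prop)
    (hantisymm : ∀ a b, le a b → le b a → a = b)
    (htrans : ∀ a b c, le a b → le b c → le a c)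
    (Ψ : A → (Fin N → ℤ))
    (hΨsmul : ∀ c : k, c ≠ 0 → ∀ f : A, f ≠ 0 → Ψ (c • f) = Ψ f)
    (hΨadd : ∀ f g : A, f ≠ 0 → g ≠ 0 → f + g ≠ 0 →
      le (Ψ (f + g)) (Ψ f) ∨ le (Ψ (f + g)) (Ψ g))
    (P Q : A) (hP : P ≠ 0) (hQ : Q ≠ 0) (hPQ : P + Q ≠ 0)
    (hle : le (Ψ Q) (Ψ P)) (hne : Ψ P ≠ Ψ Q) : Ψ (P + Q) = Ψ P := by
  have hnegQ : (-Q : A) ≠ 0 := neg_ne_zero.2 hQ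
  have hΨneg : Ψ (-Q) = Ψ Q := by
    rw [← neg_one_smul k Q]
    exact hΨsmul (-1) (neg_ne_zero.2 one_ne_zero) Q hQ
  have h1 : le (Ψ (P + Q)) (Ψ P) := by
    rcases hΨadd P Q hP hQ hPQ with h | h
    · exact h
    · exact htrans _ _ _ h hle
  have h2 : le (Ψ P) (Ψ (P + Q)) := by
    have hx : P + Q + -Q = P := by ring
    have := hΨadd (P + Q) (-Q) hPQ hnegQ (by rw [hx]; exact hP)
    rw [hx, hΨneg] at this
    rcases this with h | h
    · exact h
    · exact absurd (hantisymm _ _ h hle) hne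
  exact hantisymm _ _ h1 h2
theorem stmt8 {k A : Type*} [Field k] [CommRing A] [IsDomain A] [Algebra k A]
    {N : ℕ} (hN : 1 ≤ N)
    (le : (Fin N → ℤ) → (Fin N → ℤ) → Prop)
    (hrefl : ∀ a, le a a)
    (hantisymm : ∀ a b, le a b → le b a → a = b)
    (htrans : ∀ a b c, le a b → le b c → le a c)
    (htotal : ∀ a b, le a b ∨ le b a)
    (haddinv : ∀ a b c, le a b → le (a + c) (b + c))
    (Ψ : A → (Fin N → ℤ))
    (hΨmul : ∀ f g : A, f ≠ 0 → g ≠ 0 → Ψ (f * g) = Ψ f + Ψ g)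
    (hΨsmul : ∀ c : k, c ≠ 0 → ∀ f : A, f ≠ 0 → Ψ (c • f) = Ψ f)
    (hΨadd : ∀ f g : A, f ≠ 0 → g ≠ 0 → f + g ≠ 0 →
      le (Ψ (f + g)) (Ψ f) ∨ le (Ψ (f + g)) (Ψ g))
    (x : Fin N → A) (x'k : A) (k₀ : Fin N)
    (hx : ∀ i, x i ≠ 0) (hx'k : x'k ≠ 0)
    (b : Fin N → ℤ)
    (hexch : x'k * x k₀ =
      (∏ i : Fin N, if 0 < b i then x i ^ (b i).toNat else 1) +
      (∏ i : Fin N, if b i < 0 then x i ^ (-(b i)).toNat else 1))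
    (hv : (∑ i : Fin N, b i • Ψ (x i)) ≠ 0) :
    (le 0 (∑ i : Fin N, b i • Ψ (x i)) →
       Ψ x'k = -Ψ (x k₀) + ∑ i : Fin N, (max (b i) 0) • Ψ (x i)) ∧
    (¬ le 0 (∑ i : Fin N, b i • Ψ (x i)) →
       Ψ x'k = -Ψ (x k₀) + ∑ i : Fin N, (max (-(b i)) 0) • Ψ (x i)) := by
  set P : A := ∏ i : Fin N, if 0 < b i then x i ^ (b i).toNat else 1 with hPdef
  set Q : A := ∏ i : Fin N, if b i < 0 then x i ^ (-(b i)).toNat else 1 with hQdef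
  have hΨ1 : Ψ (1 : A) = 0 := by
    have h := hΨmul 1 1 one_ne_zero one_ne_zero
    rw [mul_one] at h
    exact left_eq_add.mp h
  have hΨpow : ∀ (y : A), y ≠ 0 → ∀ n : ℕ, Ψ (y ^ n) = n • Ψ y := by
    intro y hy n
    induction n with
    | zero => simpa using hΨ1
    | succ n ih =>
      rw [pow_succ, hΨmul _ _ (pow_ne_zero _ hy) hy, ih, succ_nsmul]
  have hfacP : ∀ i ∈ Finset.univ,
      (if 0 < b i then x i ^ (b i).toNat else 1 : A) ≠ 0 := by
    intro i _
    split
    · exact pow_ne_zero _ (hx i)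
    · exact one_ne_zero
  have hfacQ : ∀ i ∈ Finset.univ,
      (if b i < 0 then x i ^ (-(b i)).toNat else 1 : A) ≠ 0 := by
    intro i _
    split
    · exact pow_ne_zero _ (hx i)
    · exact one_ne_zero
  have hP0 : P ≠ 0 := Finset.prod_ne_zero_iff.2 hfacP
  have hQ0 : Q ≠ 0 := Finset.prod_ne_zero_iff.2 hfacQ
  have hΨP : Ψ P = ∑ i : Fin N, (max (b i) 0) • Ψ (x i) := by
    rw [hPdef, stmt8_prod Ψ hΨmul hΨ1 _ _ hfacP]
    refine Finset.sum_congr rfl fun i _ => ?_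
    by_cases h : 0 < b i
    · rw [if_pos h, hΨpow _ (hx i), ← natCast_zsmul]
      congr 1
      omega
    · rw [if_neg h, hΨ1]
      have : max (b i) 0 = 0 := by omega
      rw [this, zero_smul]
  have hΨQ : Ψ Q = ∑ i : Fin N, (max (-(b i)) 0) • Ψ (x i) := by
    rw [hQdef, stmt8_prod Ψ hΨmul hΨ1 _ _ hfacQ]
    refine Finset.sum_congr rfl fun i _ => ?_
    by_cases h : b i < 0
    · rw [if_pos h, hΨpow _ (hx i), ← natCast_zsmul]
      congr 1
      omega
    · rw [if_neg h, hΨ1]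
      have : max (-(b i)) 0 = 0 := by omega
      rw [this, zero_smul]
  have hvPQ : (∑ i : Fin N, b i • Ψ (x i)) = Ψ P - Ψ Q := by
    rw [hΨP, hΨQ, ← Finset.sum_sub_distrib]
    refine Finset.sum_congr rfl fun i _ => ?_
    rw [← sub_smul]
    congr 1
    omega
  have hPQ0 : P + Q ≠ 0 := by
    rw [← hexch]; exact mul_ne_zero hx'k (hx k₀)
  have hPQne : Ψ P ≠ Ψ Q := by
    intro h
    apply hv
    rw [hvPQ, h, sub_self]
  have hmul : Ψ x'k + Ψ (x k₀) = Ψ (P + Q) := by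
    rw [← hΨmul _ _ hx'k (hx k₀), hexch]
  constructor
  · intro hle0
    have hQP : le (Ψ Q) (Ψ P) := by
      have h0 : le 0 (Ψ P - Ψ Q) := by rw [← hvPQ]; exact hle0
      have := haddinv _ _ (Ψ Q) h0
      rw [zero_add, sub_add_cancel] at this
      exact this
    have hkey : Ψ (P + Q) = Ψ P :=
      stmt8_addkey le hantisymm htrans Ψ hΨsmul hΨadd P Q hP0 hQ0 hPQ0 hQP hPQne
    rw [← hΨP, ← hkey, ← hmul]
    abel
  · intro hnle
    have hle0' : le (∑ i : Fin N, b i • Ψ (x i)) 0 := by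
      rcases htotal 0 (∑ i : Fin N, b i • Ψ (x i)) with h | h
      · exact absurd h hnle
      · exact h
    have hPQle : le (Ψ P) (Ψ Q) := by
      have h0 : le (Ψ P - Ψ Q) 0 := by rw [← hvPQ]; exact hle0'
      have := haddinv _ _ (Ψ Q) h0
      rw [zero_add, sub_add_cancel] at this
      exact this
    have hQP0 : Q + P ≠ 0 := by rw [add_comm]; exact hPQ0
    have hkey : Ψ (Q + P) = Ψ Q :=
      stmt8_addkey le hantisymm htrans Ψ hΨsmul hΨadd Q P hQ0 hP0 hQP0 hPQle
        (Ne.symm hPQne)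
    rw [add_comm Q P] at hkey
    rw [← hΨQ, ← hkey, ← hmul]
    abel
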